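/- Let K be an algebraically closed field equipped with a real-valued valuation v such that 1 lies in the image v(Kˣ), and let I ⊆ K[x_0,…,x_n] be a homogeneous ideal with zero locus Z(I) ⊆ K^{n+1}. Then Trop(Z(I)) ⊆ ℝ^{n+1} is a tropical cone: for every ω ∈ Trop(Z(I)) and every λ ∈ ℝ, the point (ω_0 + λ, …, ω_n + λ) belongs to Trop(Z(I)). -/

import Mathlib

open MvPolynomial

/-- `v : K → ℝ` is a real-valued valuation on the field `K`.  This encodes the usual
notion of a map `v : K → ℝ ∪ {∞}` with `v x = ∞ ↔ x = 0`, `v (x*y) = v x + v y` and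
`v (x+y) ≥ min (v x) (v y)`: the value of `v` at `0` is irrelevant (it "is" `∞`), and
all the axioms involving `0` are automatic. -/
def IsRealValuation {K : Type*} [Field K] (v : K → ℝ) : Prop :=
  (∀ x y : K, x ≠ 0 → y ≠ 0 → v (x * y) = v x + v y) ∧
  (∀ x y : K, x ≠ 0 → y ≠ 0 → x + y ≠ 0 → min (v x) (v y) ≤ v (x + y))

/-- `Trop(Z(I))`: the closure in `ℝⁿ` of the set of coordinatewise tropicalizations
`ω i = -(v (x i))` of the points `x` of the zero locus of `I` all of whose coordinates
are nonzero. -/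
def tropOfZeroLocus {K : Type*} [Field K] {n : ℕ} (v : K → ℝ)
    (I : Ideal (MvPolynomial (Fin n) K)) : Set (Fin n → ℝ) :=
  closure { ω : Fin n → ℝ | ∃ x : Fin n → K,
    (∀ f ∈ I, MvPolynomial.eval x f = 0) ∧ (∀ i, x i ≠ 0) ∧ (∀ i, ω i = -(v (x i))) }

/-- The value `-(v f_a) + ⟨ω, a⟩` of the term of the tropicalization `τ(f)`
corresponding to the exponent `a`, at the point `ω`. -/
def tropTerm {K : Type*} [Field K] {n : ℕ} (v : K → ℝ) (f : MvPolynomial (Fin n) K)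
    (ω : Fin n → ℝ) (a : Fin n →₀ ℕ) : ℝ :=
  -(v (f.coeff a)) + ∑ i, ω i * (a i : ℝ)

/-- `T(τ(f))`: the tropical zero locus of the tropicalization of `f`, i.e. the set of `ω`
where the maximum of the terms of `τ(f)` is attained at least twice. -/
def tropHypersurface {K : Type*} [Field K] {n : ℕ} (v : K → ℝ)
    (f : MvPolynomial (Fin n) K) : Set (Fin n → ℝ) :=
  { ω | ∃ a ∈ f.support, ∃ b ∈ f.support, a ≠ b ∧
      tropTerm v f ω a = tropTerm v f ω b ∧
      ∀ c ∈ f.support, tropTerm v f ω c ≤ tropTerm v f ω a }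

/-- A homogeneous ideal: one containing all homogeneous components of its elements. -/
def IsHomogeneousIdeal {K : Type*} [CommSemiring K] {n : ℕ}
    (I : Ideal (MvPolynomial (Fin n) K)) : Prop :=
  ∀ f ∈ I, ∀ d : ℕ, MvPolynomial.homogeneousComponent d f ∈ I

/-- `I` is saturated: `I = { g | ∃ N, ∀ j, g * x_j ^ N ∈ I }`. -/
def IsSaturatedIdeal {K : Type*} [CommSemiring K] {n : ℕ}
    (I : Ideal (MvPolynomial (Fin n) K)) : Prop :=
  ∀ g, g ∈ I ↔ ∃ N : ℕ, ∀ j : Fin n, g * (X j) ^ N ∈ I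

/-- `I_d`: the degree-`d` homogeneous component of the ideal `I`, as a `K`-subspace. -/
noncomputable def idealComponent {K : Type*} [CommRing K] {n : ℕ}
    (I : Ideal (MvPolynomial (Fin n) K)) (d : ℕ) : Submodule K (MvPolynomial (Fin n) K) :=
  (homogeneousSubmodule (Fin n) K d) ⊓ (Submodule.restrictScalars K I)

/-- The Hilbert function `h_I(d) = dim_K S_d - dim_K I_d`. -/
noncomputable def hilbertFn {K : Type*} [CommRing K] {n : ℕ}
    (I : Ideal (MvPolynomial (Fin n) K)) (d : ℕ) : ℕ :=
  Module.finrank K (homogeneousSubmodule (Fin n) K d) - Module.finrank K (idealComponent I d)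

/-- The value at `d` of the numerical polynomial `g(m_0, …, m_s; x)`. -/
def gVal (s : ℕ) (m : Fin (s + 1) → ℕ) (d : ℕ) : ℕ :=
  ∑ i : Fin (s + 1), (Nat.choose (d + i) (i + 1) - Nat.choose (d + i - m i) (i + 1))

/-- `I` has Hilbert polynomial `g(m_0, …, m_s; x)`: its Hilbert function agrees with
`g(m_0, …, m_s; ·)` for all large enough degrees. -/
def HasHilbertPoly {K : Type*} [CommRing K] {n : ℕ}
    (I : Ideal (MvPolynomial (Fin n) K)) (s : ℕ) (m : Fin (s + 1) → ℕ) : Prop :=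
  ∃ d₀ : ℕ, ∀ d ≥ d₀, hilbertFn I d = gVal s m d

section Aux

variable {K : Type*} [Field K] {v : K → ℝ}

lemma RV.one (hv : IsRealValuation v) : v 1 = 0 := by
  have := hv.1 1 1 one_ne_zero one_ne_zero
  simp at this; linarith

lemma RV.pow (hv : IsRealValuation v) {c : K} (hc : c ≠ 0) (k : ℕ) :
    v (c ^ k) = k * v c := by
  induction k with
  | zero => simpa using RV.one hv
  | succ k ih =>
      rw [pow_succ, hv.1 _ _ (pow_ne_zero _ hc) hc, ih]
      push_cast; ring

lemma RV.inv (hv : IsRealValuation v) {c : K} (hc : c ≠ 0) : v c⁻¹ = -v c := by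
  have := hv.1 c c⁻¹ hc (inv_ne_zero hc)
  rw [mul_inv_cancel₀ hc, RV.one hv] at this
  linarith

lemma RV.zpow (hv : IsRealValuation v) {c : K} (hc : c ≠ 0) (m : ℤ) :
    v (c ^ m) = m * v c := by
  cases m with
  | ofNat k => rw [Int.ofNat_eq_coe, zpow_natCast, RV.pow hv hc]; push_cast; ring
  | negSucc k =>
      rw [zpow_negSucc, RV.inv hv (pow_ne_zero _ hc), RV.pow hv hc]
      push_cast; ring

lemma eval_homog {n d : ℕ} {g : MvPolynomial (Fin n) K}
    (hg : g.IsHomogeneous d) (c : K) (x : Fin n → K) :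
    MvPolynomial.eval (fun i => c * x i) g = c ^ d * MvPolynomial.eval x g := by
  rw [MvPolynomial.eval_eq', MvPolynomial.eval_eq', Finset.mul_sum]
  refine Finset.sum_congr rfl fun a ha => ?_
  have hdeg : ∑ i, a i = d := by
    have h := hg (MvPolynomial.mem_support_iff.mp ha)
    rw [Finsupp.weight_apply] at h
    simp only [Pi.one_apply, smul_eq_mul, mul_one] at h
    rw [← h, Finsupp.sum]
    exact (Finset.sum_subset (Finset.subset_univ _)
      (fun i _ hi => Finsupp.notMem_support_iff.mp hi)).symm
  have : ∏ i, (c * x i) ^ a i = c ^ d * ∏ i, x i ^ a i := by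
    simp_rw [mul_pow, Finset.prod_mul_distrib, Finset.prod_pow_eq_pow_sum, hdeg]
  rw [this]; ring

end Aux

/-- The tropicalization of the zero locus of a homogeneous ideal
`I ⊆ K[x_0,…,x_n]` is a tropical cone: it is stable under simultaneous translation of
all coordinates. -/
theorem trop_of_homogeneous_is_tropical_cone
    {K : Type*} [Field K] [IsAlgClosed K] (v : K → ℝ) (hv : IsRealValuation v)
    (hone : ∃ u : K, u ≠ 0 ∧ v u = 1)
    {n : ℕ} (I : Ideal (MvPolynomial (Fin (n + 1)) K)) (hIhom : IsHomogeneousIdeal I) :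
    ∀ ω ∈ tropOfZeroLocus v I, ∀ lam : ℝ,
      (fun i => ω i + lam) ∈ tropOfZeroLocus v I := by
  classical
  set S : Set (Fin (n + 1) → ℝ) := { ω : Fin (n + 1) → ℝ | ∃ x : Fin (n + 1) → K,
    (∀ f ∈ I, MvPolynomial.eval x f = 0) ∧ (∀ i, x i ≠ 0) ∧ (∀ i, ω i = -(v (x i))) } with hSdef
  have htrop : tropOfZeroLocus v I = closure S := rfl
  -- Step 1: translation by -(v c) preserves S
  have hS : ∀ c : K, c ≠ 0 → ∀ ω' ∈ S, (fun i => ω' i + (-(v c))) ∈ S := by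
    rintro c hc ω' ⟨x, hx1, hx2, hx3⟩
    refine ⟨fun i => c * x i, ?_, fun i => mul_ne_zero hc (hx2 i), fun i => ?_⟩
    · intro f hf
      conv_lhs => rw [← MvPolynomial.sum_homogeneousComponent f]
      rw [map_sum]
      refine Finset.sum_eq_zero fun d _ => ?_
      rw [eval_homog (MvPolynomial.homogeneousComponent_isHomogeneous d f) c x,
        hx1 _ (hIhom f hf d), mul_zero]
    · show ω' i + -(v c) = -(v (c * x i))
      rw [hx3 i, hv.1 c (x i) hc (hx2 i)]; ring
  -- Step 2: translation by t with ∃ c ≠ 0, v c = -t preserves closure S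
  have hT : ∀ t : ℝ, (∃ c : K, c ≠ 0 ∧ v c = -t) → ∀ ω' ∈ closure S,
      (fun i => ω' i + t) ∈ closure S := by
    rintro t ⟨c, hc, hvc⟩ ω' hω'
    have hcont : Continuous fun (w : Fin (n + 1) → ℝ) => fun i => w i + t :=
      continuous_pi fun i => (continuous_apply i).add continuous_const
    have h1 : (fun i => ω' i + t) ∈ (fun (w : Fin (n + 1) → ℝ) => fun i => w i + t) '' closure S :=
      ⟨ω', hω', rfl⟩
    have h2 := image_closure_subset_closure_image (s := S) hcont h1
    refine closure_mono ?_ h2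
    rintro w ⟨w', hw', rfl⟩
    have := hS c hc w' hw'
    simpa [hvc] using this
  -- Step 3: the set of achievable translations contains all rationals, hence is dense
  obtain ⟨u, hu, hvu⟩ := hone
  have hrat : ∀ q : ℚ, ∃ c : K, c ≠ 0 ∧ v c = -(q : ℝ) := by
    intro q
    obtain ⟨w, hw⟩ := IsAlgClosed.exists_pow_nat_eq u q.pos
    have hwne : w ≠ 0 := by
      rintro rfl; rw [zero_pow q.den_nz] at hw; exact hu hw.symm
    have hvw : v w = 1 / q.den := by
      have := RV.pow hv hwne q.den
      rw [hw, hvu] at this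
      field_simp
      linarith [this]
    refine ⟨w ^ (-q.num : ℤ), zpow_ne_zero _ hwne, ?_⟩
    rw [RV.zpow hv hwne, hvw, Rat.cast_def]
    push_cast
    have : (q.den : ℝ) ≠ 0 := Nat.cast_ne_zero.mpr q.den_nz
    field_simp
  have hdense : Dense {t : ℝ | ∃ c : K, c ≠ 0 ∧ v c = -t} := by
    refine Rat.denseRange_cast.mono ?_
    rintro t ⟨q, rfl⟩
    exact hrat q
  -- Step 4: conclude by continuity
  intro ω hω lam
  rw [htrop]
  have hcont : Continuous fun t : ℝ => (fun i => ω i + t : Fin (n + 1) → ℝ) :=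
    continuous_pi fun i => continuous_const.add continuous_id
  have himg : (fun t : ℝ => (fun i => ω i + t : Fin (n + 1) → ℝ)) ''
      {t : ℝ | ∃ c : K, c ≠ 0 ∧ v c = -t} ⊆ closure S := by
    rintro w ⟨t, ht, rfl⟩
    exact hT t ht ω hω
  have hlam : lam ∈ closure {t : ℝ | ∃ c : K, c ≠ 0 ∧ v c = -t} := hdense lam
  have := image_closure_subset_closure_image
    (s := {t : ℝ | ∃ c : K, c ≠ 0 ∧ v c = -t}) hcont ⟨lam, hlam, rfl⟩
  have := closure_mono himg this
  rwa [closure_closure] at this
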